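/- For all natural numbers b and C₁ there exists a natural number C₂ with the following property: whenever Γ is a finite group and N is a normal subgroup of Γ with |N| ≤ C₁ such that Γ/N is isomorphic to (ℤ/a)^b for some natural number a, then Γ contains a subgroup isomorphic to (ℤ/a')^b for some natural number a' satisfying C₂·a' ≥ a. -/

import Mathlib

open scoped commutatorElement

private lemma aux_comm_pow {G : Type*} [Group G] {x y c : G} (j : ℕ)
    (h : y * x = c * (x * y)) (hcx : Commute c x) (hcj : c ^ j = 1) :
    Commute (x ^ j) (y ^ j) := by
  have h' : SemiconjBy y x (c * x) := by
    unfold SemiconjBy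
    rw [h, mul_assoc]
  have h2 := h'.pow_right j
  rw [hcx.mul_pow, hcj, one_mul] at h2
  exact (Commute.symm h2).pow_right j

private lemma aux_dual {A D : Type*} [Group A] [Finite A] [CommGroup D] [Finite D]
    (hcomm : ∀ x y : A, x * y = y * x)
    (f : A →* D) (hf : Function.Surjective f) :
    ∃ H : Subgroup A, Nonempty (H ≃* D) := by
  letI : CommGroup A := { (inferInstance : Group A) with mul_comm := hcomm }
  have hexp : Monoid.exponent D ∣ Monoid.exponent A := MonoidHom.exponent_dvd hf
  have hA0 : Monoid.exponent A ≠ 0 := Monoid.exponent_ne_zero_of_finite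
  haveI : NeZero ((Monoid.exponent A : ℂ)) := ⟨Nat.cast_ne_zero.mpr hA0⟩
  haveI : HasEnoughRootsOfUnity ℂ (Monoid.exponent D) := HasEnoughRootsOfUnity.of_dvd ℂ hexp
  obtain ⟨eA⟩ := CommGroup.monoidHom_mulEquiv_of_hasEnoughRootsOfUnity A ℂ
  obtain ⟨eD⟩ := CommGroup.monoidHom_mulEquiv_of_hasEnoughRootsOfUnity D ℂ
  let g : (D →* ℂˣ) →* (A →* ℂˣ) :=
    { toFun := fun φ => φ.comp f
      map_one' := by ext; simp
      map_mul' := by intros; ext; simp }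
  have hg : Function.Injective g := fun φ ψ h => MonoidHom.ext fun d => by
    obtain ⟨x, rfl⟩ := hf d
    exact DFunLike.congr_fun h x
  let emb : D →* A := eA.toMonoidHom.comp (g.comp eD.symm.toMonoidHom)
  have hemb : Function.Injective emb := by
    simpa [emb] using eA.injective.comp (hg.comp eD.symm.injective)
  exact ⟨emb.range, ⟨(MonoidHom.ofInjective hemb).symm⟩⟩

/-- For all natural numbers `b` and `C₁` there exists `C₂` such that: whenever `Γ` is a
finite group, `N` is a normal subgroup of `Γ` with `|N| ≤ C₁`, and `Γ/N ≅ (ℤ/a)^b` for some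
natural number `a`, then `Γ` contains a subgroup isomorphic to `(ℤ/a')^b` for some `a'`
with `C₂ * a' ≥ a`. -/
theorem stmt5 (b C₁ : ℕ) :
    ∃ C₂ : ℕ, ∀ (Γ : Type) [Group Γ] [Finite Γ] (N : Subgroup Γ) [N.Normal] (a : ℕ),
      Nat.card N ≤ C₁ →
      Nonempty ((Γ ⧸ N) ≃* Multiplicative (Fin b → ZMod a)) →
      ∃ a' : ℕ, a ≤ C₂ * a' ∧
        ∃ H : Subgroup Γ, Nonempty (H ≃* Multiplicative (Fin b → ZMod a')) := by
  classical
  set E := C₁ ^ C₁ + C₁ with hE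
  set j := Nat.factorial E with hj
  have hjpos : 0 < j := Nat.factorial_pos E
  set m₀ := j * j with hm₀
  have hm₀pos : 0 < m₀ := Nat.mul_pos hjpos hjpos
  refine ⟨m₀, ?_⟩
  intro Γ _ _ N _ a hN hiso
  obtain ⟨e⟩ := hiso
  haveI hMfin : Finite (Multiplicative (Fin b → ZMod a)) := Finite.of_equiv _ e.toEquiv
  set M := Multiplicative (Fin b → ZMod a) with hM
  let φ : Γ →* M := e.toMonoidHom.comp (QuotientGroup.mk' N)
  have hφsurj : Function.Surjective φ := e.surjective.comp (QuotientGroup.mk'_surjective N)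
  have hker : ∀ w : Γ, φ w = 1 ↔ w ∈ N := by
    intro w
    show e (QuotientGroup.mk' N w) = 1 ↔ _
    rw [MulEquiv.map_eq_one_iff]
    exact QuotientGroup.eq_one_iff w
  -- size facts
  have hn1 : 0 < Nat.card N := Nat.card_pos
  have hnE : Nat.card N ≤ E := le_trans hN (by omega)
  have hndvd : Nat.card N ∣ j := Nat.dvd_factorial hn1 hnE
  have hNpow : ∀ c : Γ, c ∈ N → c ^ j = 1 := by
    intro c hc
    obtain ⟨d, hd⟩ := hndvd
    have h1 : (⟨c, hc⟩ : N) ^ Nat.card N = 1 := pow_card_eq_one'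
    have h2 : c ^ Nat.card N = 1 := by
      have h2' := congrArg (fun t : N => (t : Γ)) h1
      push_cast at h2'
      exact h2'
    rw [hd, pow_mul, h2, one_pow]
  -- kernel of the conjugation action
  let conj : Γ →* MulAut N := MulAut.conjNormal
  set K := conj.ker with hK
  have hKcomm : ∀ x ∈ K, ∀ c : Γ, c ∈ N → c * x = x * c := by
    intro x hx c hc
    have h1 : conj x = 1 := hx
    have h2 : ((conj x ⟨c, hc⟩ : N) : Γ) = c := by rw [h1]; rfl
    have h3 : x * c * x⁻¹ = c := by
      have h4 := MulAut.conjNormal_apply (H := N) x ⟨c, hc⟩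
      exact h4.symm.trans h2
    calc c * x = (x * c * x⁻¹) * x := by rw [h3]
    _ = x * c := by group
  haveI : Finite (MulAut N) :=
    Finite.of_injective (fun (f : MulAut N) => (f : N → N)) DFunLike.coe_injective
  have hKindex : K.index ≤ E := by
    have h1 : K.index = Nat.card conj.range := Subgroup.index_ker conj
    have h2 : Nat.card conj.range ≤ Nat.card (MulAut N) :=
      Nat.card_le_card_of_injective _ Subtype.val_injective
    have h3 : Nat.card (MulAut N) ≤ Nat.card (N → N) :=
      Nat.card_le_card_of_injective (fun (f : MulAut N) => (f : N → N)) DFunLike.coe_injective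
    have h4 : Nat.card (N → N) = Nat.card N ^ Nat.card N := Nat.card_fun
    have h5 : Nat.card N ^ Nat.card N ≤ C₁ ^ C₁ :=
      le_trans (Nat.pow_le_pow_left hN _) (Nat.pow_le_pow_right (le_trans hn1 hN) hN)
    omega
  have hKne : K.index ≠ 0 := Subgroup.index_ne_zero_of_finite
  have hiKdvd : (Subgroup.map φ K).index ∣ K.index := K.index_map_dvd hφsurj
  have hine : (Subgroup.map φ K).index ≠ 0 := Subgroup.index_ne_zero_of_finite
  have hile : (Subgroup.map φ K).index ≤ E :=
    le_trans (Nat.le_of_dvd (Nat.pos_of_ne_zero hKne) hiKdvd) hKindex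
  have hidvdj : (Subgroup.map φ K).index ∣ j :=
    Nat.dvd_factorial (Nat.pos_of_ne_zero hine) hile
  have hpowK : ∀ q : M, q ^ j ∈ Subgroup.map φ K := by
    intro q
    obtain ⟨d, hd⟩ := hidvdj
    rw [hd, pow_mul]
    exact Subgroup.pow_mem _ (Subgroup.pow_index_mem _ q) d
  -- the abelian subgroup of j-th powers of elements of K
  set S : Set Γ := {w | ∃ x ∈ K, x ^ j = w} with hS
  have hScomm : ∀ w ∈ S, ∀ w' ∈ S, w * w' = w' * w := by
    rintro _ ⟨x, hx, rfl⟩ _ ⟨y, hy, rfl⟩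
    have hcN : ⁅y, x⁆ ∈ N := by
      rw [← hker]
      rw [map_commutatorElement]
      exact commutatorElement_eq_one_iff_mul_comm.mpr (mul_comm _ _)
    have h : y * x = ⁅y, x⁆ * (x * y) := by group
    have hcx : Commute ⁅y, x⁆ x := hKcomm x hx _ hcN
    exact aux_comm_pow j h hcx (hNpow _ hcN)
  set A := Subgroup.closure S with hA
  have hAcomm : ∀ p q : Γ, p ∈ A → q ∈ A → p * q = q * p := by
    intro p q hp hq
    have hle := Subgroup.closure_le_centralizer_centralizer S
    exact Set.centralizer_centralizer_comm_of_comm hScomm p (hle hp) q (hle hq)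
  have hApow : ∀ q : M, q ^ m₀ ∈ Subgroup.map φ A := by
    intro q
    obtain ⟨x, hx, hxq⟩ := hpowK q
    refine ⟨x ^ j, Subgroup.subset_closure ⟨x, hx, rfl⟩, ?_⟩
    rw [map_pow, hxq, ← pow_mul]
  -- the cyclic subgroup generated by m₀ in ZMod a
  set g₀ : ZMod a := (m₀ : ZMod a) with hg₀
  set a' := addOrderOf g₀ with ha'
  have hza : (zmultiplesHom (ZMod a) g₀) (a' : ℤ) = 0 := by
    show (a' : ℤ) • g₀ = 0
    rw [natCast_zsmul]
    exact addOrderOf_nsmul_eq_zero g₀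
  set u : ZMod a' →+ ZMod a := ZMod.lift a' ⟨zmultiplesHom (ZMod a) g₀, hza⟩ with hu
  have huinj : Function.Injective u := by
    rw [hu, ZMod.lift_injective]
    intro m hm
    have hm' : m • g₀ = 0 := hm
    have : ((addOrderOf g₀ : ℤ)) ∣ m := addOrderOf_dvd_iff_zsmul_eq_zero.mpr hm'
    rw [ZMod.intCast_zmod_eq_zero_iff_dvd]
    exact_mod_cast this
  have humem : ∀ y : ZMod a', ∃ z : ℤ, u y = z • g₀ := by
    intro y
    obtain ⟨z, rfl⟩ := ZMod.intCast_surjective y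
    exact ⟨z, by rw [hu, ZMod.lift_coe]; rfl⟩
  have hbound : a ≤ m₀ * a' := by
    rcases eq_or_ne a 0 with rfl | ha
    · exact Nat.zero_le _
    · have h1 : a' = a / Nat.gcd a m₀ := by rw [ha', hg₀]; exact ZMod.addOrderOf_coe m₀ ha
      have hgdvd : Nat.gcd a m₀ ∣ a := Nat.gcd_dvd_left a m₀
      have hgle : Nat.gcd a m₀ ≤ m₀ := Nat.le_of_dvd hm₀pos (Nat.gcd_dvd_right a m₀)
      calc a = Nat.gcd a m₀ * (a / Nat.gcd a m₀) := (Nat.mul_div_cancel' hgdvd).symm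
      _ ≤ m₀ * (a / Nat.gcd a m₀) := Nat.mul_le_mul_right _ hgle
      _ = m₀ * a' := by rw [h1]
  -- the embedding ι : M₁ → M
  set M₁ := Multiplicative (Fin b → ZMod a') with hM₁
  set U : (Fin b → ZMod a') →+ (Fin b → ZMod a) :=
    { toFun := fun y i => u (y i)
      map_zero' := by funext i; simp
      map_add' := fun y z => by funext i; simp } with hU
  have hUinj : Function.Injective U := fun y z h => funext fun i => huinj (congrFun h i)
  set ι : M₁ →* M := AddMonoidHom.toMultiplicative U with hι
  have hιinj : Function.Injective ι := fun p q h => hUinj (by exact h)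
  have hιmem : ∀ y : M₁, ι y ∈ Subgroup.map φ A := by
    intro y
    have h := fun i => humem (Multiplicative.toAdd y i)
    choose z hz using h
    set q : M := Multiplicative.ofAdd (fun i => ((z i : ZMod a))) with hq'
    have hqy : q ^ m₀ = ι y := by
      apply Multiplicative.toAdd.injective
      rw [toAdd_pow]
      funext i
      show m₀ • ((z i : ZMod a)) = u (Multiplicative.toAdd y i)
      rw [hz i, zsmul_eq_mul, nsmul_eq_mul, hg₀, mul_comm]
    rw [← hqy]
    exact hApow q
  -- the abelian subgroup A₀ and its surjection onto M₁
  set A₀ : Subgroup Γ := A ⊓ Subgroup.comap φ ι.range with hA₀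
  have hA₀comm : ∀ p q : A₀, p * q = q * p := fun p q => Subtype.ext
    (hAcomm p.1 q.1 (Subgroup.mem_inf.mp p.2).1 (Subgroup.mem_inf.mp q.2).1)
  let eι : M₁ ≃* ι.range := MonoidHom.ofInjective hιinj
  let θ₀ : A₀ →* ι.range :=
    (φ.comp A₀.subtype).codRestrict _
      (fun x => Subgroup.mem_comap.mp (Subgroup.mem_inf.mp x.2).2)
  let θ : A₀ →* M₁ := eι.symm.toMonoidHom.comp θ₀
  have hθsurj : Function.Surjective θ := by
    intro y
    obtain ⟨x, hxA, hφx⟩ := hιmem y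
    have hx₀ : x ∈ A₀ :=
      Subgroup.mem_inf.mpr ⟨hxA, Subgroup.mem_comap.mpr ⟨y, hφx.symm⟩⟩
    refine ⟨⟨x, hx₀⟩, ?_⟩
    show eι.symm (θ₀ ⟨x, hx₀⟩) = y
    rw [MulEquiv.symm_apply_eq]
    apply Subtype.ext
    show φ x = _
    rw [MonoidHom.ofInjective_apply]
    exact hφx
  haveI : Finite M₁ := Finite.of_surjective θ hθsurj
  obtain ⟨H₀, ⟨e₀⟩⟩ := aux_dual hA₀comm θ hθsurj
  exact ⟨a', hbound, Subgroup.map A₀.subtype H₀,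
    ⟨((Subgroup.equivMapOfInjective H₀ A₀.subtype A₀.subtype_injective).symm.trans e₀)⟩⟩
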